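/- Let S and S' be numerical semigroups such that S' is a descendant of S (i.e., S' can be obtained from S by iteratively removing big primitives). Then every left element of S belongs to S', i.e., L(S) ⊆ S'. -/

import Mathlib

/-- A numerical semigroup: a cofinite additive submonoid of ℕ containing 0. -/
def IsNumericalSemigroup (S : Set ℕ) : Prop :=
  0 ∈ S ∧ (∀ a ∈ S, ∀ b ∈ S, a + b ∈ S) ∧ Sᶜ.Finite

/-- The nsConductor: least `c` such that every `n ≥ c` belongs to `S`. -/
noncomputable def nsConductor (S : Set ℕ) : ℕ :=
  sInf {c : ℕ | ∀ n : ℕ, c ≤ n → n ∈ S}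

/-- The genus: number of gaps. -/
noncomputable def genus (S : Set ℕ) : ℕ := Sᶜ.ncard

/-- The Frobenius number: largest integer not in `S` (for `S ≠ ℕ`). -/
noncomputable def nsFrobenius (S : Set ℕ) : ℕ := sSup Sᶜ

/-- The multiplicity: least positive element of `S`. -/
noncomputable def mult (S : Set ℕ) : ℕ := sInf {n : ℕ | n ∈ S ∧ n ≠ 0}

/-- `p` is a minimal generator (primitive) of `S`: nonzero element of `S` that is
not a sum of two nonzero elements of `S`. -/
def IsPrimitive (S : Set ℕ) (p : ℕ) : Prop :=
  p ∈ S ∧ p ≠ 0 ∧ ∀ a ∈ S, ∀ b ∈ S, a ≠ 0 → b ≠ 0 → a + b ≠ p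

/-- The set of minimal generators of `S`. -/
def primitives (S : Set ℕ) : Set ℕ := {p | IsPrimitive S p}

/-- The embedding dimension: number of minimal generators. -/
noncomputable def edim (S : Set ℕ) : ℕ := (primitives S).ncard

/-- The left elements: elements of `S` strictly below the nsConductor. -/
def lefts (S : Set ℕ) : Set ℕ := {s ∈ S | s < nsConductor S}

/-- The additive submonoid of ℕ generated by a set, viewed as a set. -/
def genBy (X : Set ℕ) : Set ℕ := (AddSubmonoid.closure X : Set ℕ)

/-- `T` is a child of `S`: obtained by removing one big primitive. -/
def ChildOf (S T : Set ℕ) : Prop :=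
  ∃ p : ℕ, IsPrimitive S p ∧ nsConductor S ≤ p ∧ T = S \ {p}

/-- `T` is a descendant of `S` (possibly `T = S`): obtained by finitely many
removals of big primitives. -/
def DescendantOf (S T : Set ℕ) : Prop :=
  Relation.ReflTransGen (fun A B => ChildOf A B) S T

/-- The gcd of the set `X` equals `1`: the only common divisor of all elements is `1`. -/
def SetGcdOne (X : Set ℕ) : Prop :=
  ∀ d : ℕ, (∀ x ∈ X, d ∣ x) → d = 1

theorem stmt7 (S S' : Set ℕ) (hS : IsNumericalSemigroup S)
    (hdesc : DescendantOf S S') :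
    lefts S ⊆ S' := by
  have key : ∀ T : Set ℕ, DescendantOf S T → T ⊆ S ∧ Tᶜ.Finite ∧ lefts S ⊆ T := by
    intro T h
    induction h with
    | refl => exact ⟨subset_rfl, hS.2.2, fun x hx => hx.1⟩
    | tail hST child ih =>
      rename_i b c
      obtain ⟨p, hp, hcp, rfl⟩ := child
      obtain ⟨hsub, hfin, hlef⟩ := ih
      refine ⟨(Set.diff_subset).trans hsub, ?_, ?_⟩
      · have : (b \ {p})ᶜ = bᶜ ∪ {p} := by
          ext x; simp [Set.mem_diff, or_comm, Classical.not_and_iff_not_or_not]; tauto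
        rw [this]; exact hfin.union (Set.finite_singleton p)
      · intro x hx
        have hxb : x ∈ b := hlef hx
        have hxc : x < nsConductor S := hx.2
        -- conductor of b is ≥ conductor of S
        have hne : {c : ℕ | ∀ n : ℕ, c ≤ n → n ∈ b}.Nonempty := by
          obtain ⟨m, hm⟩ := hfin.bddAbove
          refine ⟨m + 1, fun n hn => ?_⟩
          by_contra hc
          have := hm hc
          omega
        have hmem := Nat.sInf_mem hne
        have hle : nsConductor S ≤ nsConductor b := by
          apply Nat.sInf_le
          intro n hn
          exact hsub (hmem n hn)
        have hxp : x ≠ p := by omega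
        exact ⟨hxb, hxp⟩
  exact (key S' hdesc).2.2
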